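/- The Dirichlet convolution identity (I_1·J_d) ⋆ φ = J_{d+1} holds, where (I_1·J_d)(n) = n·J_d(n), φ is Euler's totient function, and ⋆ denotes Dirichlet convolution. -/

import Mathlib

/-- Jordan's totient `J_k(n) = ∑_{e ∣ n} μ(e) · (n/e)^k`, i.e. `J_k = μ ⋆ I_k`. -/
def jordan (k n : ℕ) : ℤ :=
  ∑ e ∈ n.divisors, ArithmeticFunction.moebius e * ((n / e : ℕ) : ℤ) ^ k

open ArithmeticFunction ArithmeticFunction.Moebius ArithmeticFunction.zeta in
/-- The power arithmetic function `n ↦ n^k` with values in `ℤ`. -/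
def pk (k : ℕ) : ArithmeticFunction ℤ :=
  ⟨fun n => if n = 0 then 0 else (n : ℤ) ^ k, by simp⟩

lemma pk_apply {k n : ℕ} (hn : n ≠ 0) : pk k n = (n : ℤ) ^ k := by
  simp [pk, hn]

open ArithmeticFunction ArithmeticFunction.Moebius ArithmeticFunction.zeta in
/-- The totient as an integer-valued arithmetic function. -/
def phiZ : ArithmeticFunction ℤ :=
  ⟨fun n => (Nat.totient n : ℤ), by simp⟩

lemma phiZ_apply (n : ℕ) : phiZ n = (Nat.totient n : ℤ) := rfl

open ArithmeticFunction ArithmeticFunction.Moebius ArithmeticFunction.zeta in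
lemma jordan_eq (k n : ℕ) : jordan k n = ((μ : ArithmeticFunction ℤ) * pk k) n := by
  rw [mul_apply, jordan, ← Nat.sum_divisorsAntidiagonal
    (fun a b => (μ a : ℤ) * ((b : ℕ) : ℤ) ^ k)]
  refine Finset.sum_congr rfl fun x hx => ?_
  rw [Nat.mem_divisorsAntidiagonal] at hx
  have hb : x.2 ≠ 0 := by
    rintro h; exact hx.2 (by simpa [h] using hx.1.symm)
  rw [pk_apply hb]

open ArithmeticFunction ArithmeticFunction.Moebius ArithmeticFunction.zeta in
lemma pmul_pk_distrib (f g : ArithmeticFunction ℤ) :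
    (pk 1).pmul (f * g) = ((pk 1).pmul f) * ((pk 1).pmul g) := by
  ext n
  rw [pmul_apply, mul_apply, mul_apply, Finset.mul_sum]
  refine Finset.sum_congr rfl fun x hx => ?_
  rw [Nat.mem_divisorsAntidiagonal] at hx
  have ha : x.1 ≠ 0 := by rintro h; exact hx.2 (by simpa [h] using hx.1.symm)
  have hb : x.2 ≠ 0 := by rintro h; exact hx.2 (by simpa [h] using hx.1.symm)
  rw [pmul_apply, pmul_apply, pk_apply ha, pk_apply hb, pk_apply hx.2, ← hx.1]
  push_cast
  ring

open ArithmeticFunction ArithmeticFunction.Moebius ArithmeticFunction.zeta in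
lemma pk_one_pmul_pk (k : ℕ) : (pk 1).pmul (pk k) = pk (k + 1) := by
  ext n
  rcases eq_or_ne n 0 with rfl | hn
  · simp [pk]
  · rw [pmul_apply, pk_apply hn, pk_apply hn, pk_apply hn, pow_one, ← pow_succ']

open ArithmeticFunction ArithmeticFunction.Moebius ArithmeticFunction.zeta in
lemma pk_one_eq_zeta_mul_phiZ : pk 1 = (ζ : ArithmeticFunction ℤ) * phiZ := by
  ext n
  rcases eq_or_ne n 0 with rfl | hn
  · simp
  · rw [coe_zeta_mul_apply, pk_apply hn, pow_one]
    rw [show (∑ i ∈ n.divisors, phiZ i) = ((∑ i ∈ n.divisors, Nat.totient i : ℕ) : ℤ) by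
      push_cast; rfl]
    rw [Nat.sum_totient]

open ArithmeticFunction ArithmeticFunction.Moebius ArithmeticFunction.zeta in
lemma phiZ_eq : phiZ = (μ : ArithmeticFunction ℤ) * pk 1 := by
  rw [pk_one_eq_zeta_mul_phiZ, ← mul_assoc, moebius_mul_coe_zeta, one_mul]

open ArithmeticFunction ArithmeticFunction.Moebius ArithmeticFunction.zeta in
lemma pmul_moebius_mul_pk_one :
    ((pk 1).pmul (μ : ArithmeticFunction ℤ)) * pk 1 = 1 := by
  ext n
  rw [mul_apply]
  have : ∀ x ∈ n.divisorsAntidiagonal,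
      ((pk 1).pmul (μ : ArithmeticFunction ℤ)) x.1 * pk 1 x.2
        = (n : ℤ) * ((μ x.1 : ℤ) * (ζ : ArithmeticFunction ℤ) x.2) := by
    intro x hx
    rw [Nat.mem_divisorsAntidiagonal] at hx
    have ha : x.1 ≠ 0 := by rintro h; exact hx.2 (by simpa [h] using hx.1.symm)
    have hb : x.2 ≠ 0 := by rintro h; exact hx.2 (by simpa [h] using hx.1.symm)
    rw [pmul_apply, pk_apply ha, pk_apply hb, natCoe_apply, zeta_apply, if_neg hb, ← hx.1]
    push_cast
    ring
  rw [Finset.sum_congr rfl this, ← Finset.mul_sum, ← mul_apply, moebius_mul_coe_zeta]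
  rcases eq_or_ne n 1 with rfl | hn
  · simp
  · simp [hn]

/-- The Dirichlet convolution identity `(I_1 · J_d) ⋆ φ = J_{d+1}`: for every `n ≥ 1`,
`∑_{k ∣ n} k · J_d(k) · φ(n/k) = J_{d+1}(n)`, where `φ` is Euler's totient function. -/
theorem stmt4 (d : ℕ) (hd : 1 ≤ d) (n : ℕ) (hn : 1 ≤ n) :
    ∑ k ∈ n.divisors, (k : ℤ) * jordan d k * (Nat.totient (n / k) : ℤ) = jordan (d + 1) n := by
  open ArithmeticFunction ArithmeticFunction.Moebius ArithmeticFunction.zeta in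
  have key : ((pk 1).pmul ((μ : ArithmeticFunction ℤ) * pk d)) * phiZ
      = (μ : ArithmeticFunction ℤ) * pk (d + 1) := by
    rw [pmul_pk_distrib, pk_one_pmul_pk, phiZ_eq]
    have : ((pk 1).pmul (μ : ArithmeticFunction ℤ)) * pk (d + 1)
        * ((μ : ArithmeticFunction ℤ) * pk 1)
        = (((pk 1).pmul (μ : ArithmeticFunction ℤ)) * pk 1)
          * ((μ : ArithmeticFunction ℤ) * pk (d + 1)) := by ring
    rw [this, pmul_moebius_mul_pk_one, one_mul]
  have := congrArg (fun f => f n) key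
  rw [jordan_eq, ← this, ArithmeticFunction.mul_apply,
    ← Nat.sum_divisorsAntidiagonal
      (fun a b => (a : ℤ) * jordan d a * (Nat.totient b : ℤ))]
  refine Finset.sum_congr rfl fun x hx => ?_
  rw [Nat.mem_divisorsAntidiagonal] at hx
  have ha : x.1 ≠ 0 := by rintro h; exact hx.2 (by simpa [h] using hx.1.symm)
  rw [ArithmeticFunction.pmul_apply, pk_apply ha, pow_one, phiZ_apply, jordan_eq, mul_assoc]
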